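/- (Separation of distinct KKT trajectories.) Let z*_{(1)} and z*_{(2)} be two Lipschitz continuous KKT trajectories. Suppose there exist δ₁ > 0, δ₂ > 0 and η > 0 such that Λ_m^{(i)}(δ_i) − (√η/2) δ_i M_nc^{(i)}(δ_i) > 0 for i = 1, 2, and suppose that for some t ∈ [0,S] one has x*_{(1)}(t) ≠ x*_{(2)}(t). Then ‖z*_{(1)}(t) − z*_{(2)}(t)‖_η > δ₁ + δ₂. -/

import Mathlib

open Set Metric MeasureTheory Filter
open scoped RealInnerProductSpace Topology

noncomputable section

namespace TVOpt

/-- Euclidean space `ℝ^d`. -/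
abbrev E (d : ℕ) := EuclideanSpace ℝ (Fin d)

/-- Normal cone of a (convex) set `C` at a point `x`. -/
def normalCone {d : ℕ} (C : Set (E d)) (x : E d) : Set (E d) :=
  {y | ∀ w ∈ C, ⟪y, w - x⟫ ≤ 0}

/-- The nonnegative orthant `ℝ^m_+`. -/
def orthant (m : ℕ) : Set (E m) := {v | ∀ i, 0 ≤ v i}

/-- `p` is the Euclidean metric projection of `v` onto `C`. -/
def IsProjection {d : ℕ} (C : Set (E d)) (v p : E d) : Prop :=
  p ∈ C ∧ ∀ w ∈ C, dist v p ≤ dist v w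

/-- The `η`-weighted norm `‖(x,λ)‖_η = sqrt(‖x‖² + η⁻¹‖λ‖²)`. -/
def etaNorm {n m : ℕ} (η : ℝ) (z : E n × E m) : ℝ :=
  Real.sqrt (‖z.1‖ ^ 2 + η⁻¹ * ‖z.2‖ ^ 2)

variable {n m : ℕ}

/-- Maximal speed `σ_η` of a trajectory on `[0,S]`. -/
def sigmaEta (S : ℝ) (zstar : ℝ → E n × E m) (η : ℝ) : ℝ :=
  ⨆ p : {q : ℝ × ℝ // q.1 ∈ Icc 0 S ∧ q.2 ∈ Icc 0 S ∧ q.1 ≠ q.2},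
    etaNorm η (zstar p.1.2 - zstar p.1.1) / |p.1.2 - p.1.1|

/-- `M_λ = sup_{t ∈ [0,S]} ‖λ*(t) − λ_prior‖`. -/
def Mlam (S : ℝ) (ls : ℝ → E m) (lamprior : E m) : ℝ :=
  ⨆ t : Icc (0:ℝ) S, ‖ls t.1 - lamprior‖

/-- `M_nc(δ)`:  sup of the second-derivative norm of `f^nc` near the trajectory. -/
def Mnc (S : ℝ) (fnc : E n → ℝ → E m) (xs : ℝ → E n) (δ : ℝ) : ℝ :=
  ⨆ p : {q : ℝ × E n // q.1 ∈ Icc 0 S ∧ ‖q.2‖ ≤ δ},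
    ‖fderiv ℝ (fderiv ℝ (fun x => fnc x p.1.1)) (xs p.1.1 + p.1.2)‖

/-- `M_c(δ)`:  sup of the second-derivative norm of `f^c` near the trajectory. -/
def Mcc (S : ℝ) (fc : E n → ℝ → E m) (xs : ℝ → E n) (δ : ℝ) : ℝ :=
  ⨆ p : {q : ℝ × E n // q.1 ∈ Icc 0 S ∧ ‖q.2‖ ≤ δ},
    ‖fderiv ℝ (fderiv ℝ (fun x => fc x p.1.1)) (xs p.1.1 + p.1.2)‖

/-- `L_f(δ)`: sup of the Jacobian operator norm of `f` near the trajectory. -/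
def Lf (S : ℝ) (f : E n → ℝ → E m) (xs : ℝ → E n) (δ : ℝ) : ℝ :=
  ⨆ p : {q : ℝ × E n // q.1 ∈ Icc 0 S ∧ ‖q.2‖ ≤ δ},
    ‖fderiv ℝ (fun x => f x p.1.1) (xs p.1.1 + p.1.2)‖

/-- `sup_{t∈[0,S]} ‖λ*(t)‖`. -/
def supLam (S : ℝ) (ls : ℝ → E m) : ℝ := ⨆ t : Icc (0:ℝ) S, ‖ls t.1‖

/-- `D(δ,η) = √η L_f(δ) + M_c(δ) sup_t ‖λ*(t)‖`. -/
def Dconst (S : ℝ) (fc fnc : E n → ℝ → E m) (xs : ℝ → E n) (ls : ℝ → E m) (δ η : ℝ) : ℝ :=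
  Real.sqrt η * Lf S (fun x t => fc x t + fnc x t) xs δ + Mcc S fc xs δ * supLam S ls

/-- Hessian of a scalar function, as a linear operator on `ℝ^d`. -/
def hessOp {d : ℕ} (g : E d → ℝ) (x : E d) : E d →L[ℝ] E d :=
  fderiv ℝ (gradient g) x

/-- Nonconvex part of the Lagrangian, `ℒ^nc(x,λ,t) = c(x,t) + λᵀ f^nc(x,t)`. -/
def Lnc (c : E n → ℝ → ℝ) (fnc : E n → ℝ → E m) (x : E n) (lam : E m) (t : ℝ) : ℝ :=
  c x t + ⟪lam, fnc x t⟫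

/-- Averaged Hessian `H̄_{ℒ^nc}(u,t)`. -/
def HbarL (c : E n → ℝ → ℝ) (fnc : E n → ℝ → E m) (xs : ℝ → E n) (ls : ℝ → E m)
    (u : E n) (t : ℝ) : E n →L[ℝ] E n :=
  ∫ θ in (0:ℝ)..1, hessOp (fun x => Lnc c fnc x (ls t) t) (xs t + θ • u)

/-- Averaged Hessian `H̄_{f^c_i}(u,t)`. -/
def Hbarfc (fc : E n → ℝ → E m) (xs : ℝ → E n) (i : Fin m) (u : E n) (t : ℝ) :
    E n →L[ℝ] E n :=
  ∫ θ in (0:ℝ)..1, (2 * (1 - θ)) • hessOp (fun x => fc x t i) (xs t + θ • u)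

/-- `ρ^(P)(δ,α,η,ε)`. -/
def rhoP (S : ℝ) (c : E n → ℝ → ℝ) (fc fnc : E n → ℝ → E m) (xs : ℝ → E n) (ls : ℝ → E m)
    (δ α η ε : ℝ) : ℝ :=
  ⨆ p : {q : ℝ × E n // q.1 ∈ Icc 0 S ∧ ‖q.2‖ ≤ δ},
    ‖((1 : E n →L[ℝ] E n) - α • HbarL c fnc xs ls p.1.2 p.1.1) ^ 2
      - (α * (1 - η * α * ε)) • ∑ i, ls p.1.1 i • Hbarfc fc xs i p.1.2 p.1.1‖

/-- The contraction factor `ρ(δ,α,η,ε)`. -/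
def rho (S : ℝ) (c : E n → ℝ → ℝ) (fc fnc : E n → ℝ → E m) (xs : ℝ → E n) (ls : ℝ → E m)
    (δ α η ε : ℝ) : ℝ :=
  Real.sqrt (max (rhoP S c fc fnc xs ls δ α η ε) ((1 - η * α * ε) ^ 2)
    + α * (1 - η * α * ε) * (Real.sqrt η * δ * Mnc S fnc xs δ / 2)
    + α ^ 2 * (2 * (⨆ p : {q : ℝ × E n // q.1 ∈ Icc 0 S ∧ ‖q.2‖ ≤ δ},
          ‖(η * ε) • (1 : E n →L[ℝ] E n) - HbarL c fnc xs ls p.1.2 p.1.1‖)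
            * Dconst S fc fnc xs ls δ η
        + Dconst S fc fnc xs ls δ η ^ 2))

/-- The constant `κ(δ,α,η,ε)`. -/
def kappa (S : ℝ) (c : E n → ℝ → ℝ) (fc fnc : E n → ℝ → E m) (xs : ℝ → E n) (ls : ℝ → E m)
    (δ α η ε : ℝ) : ℝ :=
  max 1 (max ((1 - η * α * ε) / rho S c fc fnc xs ls δ α η ε)
    (Real.sqrt η * α * Lf S (fun x t => fc x t + fnc x t) xs δ
      / rho S c fc fnc xs ls δ α η ε))

/-- Smallest eigenvalue of a symmetric operator, `inf_{‖h‖=1} ⟪A h, h⟫`. -/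
def lambdaMin {d : ℕ} (A : E d →L[ℝ] E d) : ℝ :=
  ⨅ h : {h : E d // ‖h‖ = 1}, ⟪A h.1, h.1⟫

/-- `Λ_m(δ)`. -/
def LambdaM (S : ℝ) (c : E n → ℝ → ℝ) (fc fnc : E n → ℝ → E m) (xs : ℝ → E n)
    (ls : ℝ → E m) (δ : ℝ) : ℝ :=
  ⨅ p : {q : ℝ × E n // q.1 ∈ Icc 0 S ∧ ‖q.2‖ ≤ δ},
    lambdaMin (HbarL c fnc xs ls p.1.2 p.1.1
      + (2⁻¹ : ℝ) • ∑ i, ls p.1.1 i • Hbarfc fc xs i p.1.2 p.1.1)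

/-- `γ(δ,η,ε) = min{Λ_m(δ), ηε} − (√η/4) δ M_nc(δ)`. -/
def gammaC (S : ℝ) (c : E n → ℝ → ℝ) (fc fnc : E n → ℝ → E m) (xs : ℝ → E n)
    (ls : ℝ → E m) (δ η ε : ℝ) : ℝ :=
  min (LambdaM S c fc fnc xs ls δ) (η * ε) - Real.sqrt η / 4 * δ * Mnc S fnc xs δ

/-- The standing data and assumptions of the time-varying nonconvex problem. -/
structure Problem (n m : ℕ) where
  S : ℝ
  hS : 0 < S
  X : ℝ → Set (E n)
  c : E n → ℝ → ℝ
  fc : E n → ℝ → E m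
  fnc : E n → ℝ → E m
  hXne : ∀ t ∈ Icc 0 S, (X t).Nonempty
  hXcl : ∀ t ∈ Icc 0 S, IsClosed (X t)
  hXcv : ∀ t ∈ Icc 0 S, Convex ℝ (X t)
  hc : ∀ t ∈ Icc 0 S, ContDiff ℝ 2 fun x => c x t
  hfc : ∀ t ∈ Icc 0 S, ContDiff ℝ 2 fun x => fc x t
  hfnc : ∀ t ∈ Icc 0 S, ContDiff ℝ 2 fun x => fnc x t
  hcHess : ContinuousOn (fun p : E n × ℝ => fderiv ℝ (fderiv ℝ fun x => c x p.2) p.1)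
    (univ ×ˢ Icc 0 S)
  hfcHess : ∀ i : Fin m, ContinuousOn
    (fun p : E n × ℝ => fderiv ℝ (fderiv ℝ fun x => fc x p.2 i) p.1) (univ ×ˢ Icc 0 S)
  hfncHess : ∀ i : Fin m, ContinuousOn
    (fun p : E n × ℝ => fderiv ℝ (fderiv ℝ fun x => fnc x p.2 i) p.1) (univ ×ˢ Icc 0 S)
  hconv : ∀ t ∈ Icc 0 S, ∀ i : Fin m, ConvexOn ℝ univ fun x => fc x t i

/-- The full constraint function `f = f^c + f^nc`. -/
def Problem.f (P : Problem n m) : E n → ℝ → E m := fun x t => P.fc x t + P.fnc x t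

/-- The KKT conditions at time `t`. -/
def IsKKT (P : Problem n m) (t : ℝ) (x : E n) (lam : E m) : Prop :=
  x ∈ P.X t ∧ lam ∈ orthant m ∧
    -(gradient (fun y => P.c y t) x
        + ContinuousLinearMap.adjoint (fderiv ℝ (fun y => P.f y t) x) lam)
      ∈ normalCone (P.X t) x ∧
    P.f x t ∈ normalCone (orthant m) lam

/-- A Lipschitz trajectory with values in `𝒳(t) × ℝ^m_+`. -/
def IsTraj (P : Problem n m) (xs : ℝ → E n) (ls : ℝ → E m) : Prop :=
  (∃ L : NNReal, LipschitzOnWith L (fun t => (xs t, ls t)) (Icc 0 P.S)) ∧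
    ∀ t ∈ Icc 0 P.S, xs t ∈ P.X t ∧ ls t ∈ orthant m

/-- A Lipschitz KKT trajectory. -/
def IsKKTTraj (P : Problem n m) (xs : ℝ → E n) (ls : ℝ → E m) : Prop :=
  IsTraj P xs ls ∧ ∀ t ∈ Icc 0 P.S, IsKKT P t (xs t) (ls t)

/-- One step of the regularized primal-dual gradient method at time `t`,
from `zp` to `zn`. -/
def IsRPDStep (P : Problem n m) (lamprior : E m) (α η ε t : ℝ)
    (zp zn : E n × E m) : Prop :=
  IsProjection (P.X t)
    (zp.1 - α • (gradient (fun x => P.c x t) zp.1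
      + ContinuousLinearMap.adjoint (fderiv ℝ (fun x => P.f x t) zp.1) zp.2)) zn.1 ∧
  IsProjection (orthant m)
    (zp.2 + (η * α) • (P.f zp.1 t - ε • (zp.2 - lamprior))) zn.2

/-- A Lipschitz solution of the regularized primal-dual gradient flow. -/
def IsFlowSol (P : Problem n m) (lamprior : E m) (β η ε : ℝ)
    (z : ℝ → E n × E m) : Prop :=
  (∃ L : NNReal, LipschitzOnWith L z (Icc 0 P.S)) ∧
  (∀ t ∈ Icc 0 P.S, (z t).1 ∈ P.X t ∧ (z t).2 ∈ orthant m) ∧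
  ∀ᵐ t ∂(volume.restrict (Icc 0 P.S)), ∃ dz : E n × E m, HasDerivAt z dz t ∧
    (-dz.1 - β • (gradient (fun x => P.c x t) (z t).1
        + ContinuousLinearMap.adjoint (fderiv ℝ (fun x => P.f x t) (z t).1) (z t).2)
      ∈ normalCone (P.X t) (z t).1) ∧
    (-dz.2 + (η * β) • (P.f (z t).1 t - ε • ((z t).2 - lamprior))
      ∈ normalCone (orthant m) (z t).2)


section ScalarCalc
variable {d k : ℕ}

lemma line_hasDerivAt (x u : E d) (θ : ℝ) : HasDerivAt (fun s : ℝ => x + s • u) u θ := by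
  simpa using ((hasDerivAt_id θ).smul_const u).const_add x

lemma fderiv2_cont {X Y : Type*} [NormedAddCommGroup X] [NormedSpace ℝ X]
    [NormedAddCommGroup Y] [NormedSpace ℝ Y] {g : X → Y} (hg : ContDiff ℝ 2 g) :
    Continuous (fderiv ℝ (fderiv ℝ g)) :=
  (hg.fderiv_right (m := 1) (by norm_num)).continuous_fderiv one_ne_zero

lemma lineDeriv1 {g : E d → ℝ} (hg : ContDiff ℝ 2 g) (x u : E d) (θ : ℝ) :
    HasDerivAt (fun s : ℝ => fderiv ℝ g (x + s • u) u)
      (fderiv ℝ (fderiv ℝ g) (x + θ • u) u u) θ := by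
  have hd : DifferentiableAt ℝ (fderiv ℝ g) (x + θ • u) :=
    ((hg.fderiv_right (m := 1) (by norm_num)).differentiable one_ne_zero) _
  have h1 : HasDerivAt (fun s : ℝ => fderiv ℝ g (x + s • u))
      (fderiv ℝ (fderiv ℝ g) (x + θ • u) u) θ :=
    hd.hasFDerivAt.comp_hasDerivAt θ (line_hasDerivAt x u θ)
  have h2 := ((ContinuousLinearMap.apply ℝ ℝ u).hasFDerivAt).comp_hasDerivAt θ h1
  simpa [Function.comp_def] using h2

lemma lineDeriv1_cont {g : E d → ℝ} (hg : ContDiff ℝ 2 g) (x u : E d) :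
    Continuous fun s : ℝ => fderiv ℝ (fderiv ℝ g) (x + s • u) u u := by
  have hline : Continuous fun s : ℝ => x + s • u := by continuity
  exact (((fderiv2_cont hg).comp hline).clm_apply continuous_const).clm_apply continuous_const

lemma line_g_hasDerivAt {g : E d → ℝ} (hg : ContDiff ℝ 2 g) (x u : E d) (θ : ℝ) :
    HasDerivAt (fun s : ℝ => g (x + s • u)) (fderiv ℝ g (x + θ • u) u) θ :=
  ((hg.differentiable (by norm_num) _).hasFDerivAt).comp_hasDerivAt θ (line_hasDerivAt x u θ)

lemma taylor1 {g : E d → ℝ} (hg : ContDiff ℝ 2 g) (x u : E d) :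
    fderiv ℝ g (x + u) u - fderiv ℝ g x u
      = ∫ θ in (0:ℝ)..1, fderiv ℝ (fderiv ℝ g) (x + θ • u) u u := by
  have h := intervalIntegral.integral_eq_sub_of_hasDerivAt
    (f := fun s : ℝ => fderiv ℝ g (x + s • u) u)
    (f' := fun s : ℝ => fderiv ℝ (fderiv ℝ g) (x + s • u) u u)
    (fun θ _ => lineDeriv1 hg x u θ)
    ((lineDeriv1_cont hg x u).intervalIntegrable 0 1)
  rw [h]; norm_num

lemma taylor2 {g : E d → ℝ} (hg : ContDiff ℝ 2 g) (x u : E d) :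
    g (x + u) - g x - fderiv ℝ g x u
      = ∫ θ in (0:ℝ)..1, (1 - θ) * fderiv ℝ (fderiv ℝ g) (x + θ • u) u u := by
  have hψ : ∀ θ ∈ uIcc (0:ℝ) 1, HasDerivAt
      (fun s : ℝ => (1 - s) * fderiv ℝ g (x + s • u) u + g (x + s • u))
      ((1 - θ) * fderiv ℝ (fderiv ℝ g) (x + θ • u) u u) θ := by
    intro θ _
    have h2 : HasDerivAt (fun s : ℝ => (1 - s)) (-1) θ := by
      simpa using (hasDerivAt_id θ).const_sub 1
    have h := (h2.fun_mul (lineDeriv1 hg x u θ)).fun_add (line_g_hasDerivAt hg x u θ)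
    exact h.congr_deriv (by ring)
  have h := intervalIntegral.integral_eq_sub_of_hasDerivAt hψ
    (((continuous_const.sub continuous_id).mul (lineDeriv1_cont hg x u)).intervalIntegrable 0 1)
  rw [h]; norm_num; ring

lemma taylor2' {g : E d → ℝ} (hg : ContDiff ℝ 2 g) (x u : E d) :
    fderiv ℝ g (x + u) u - (g (x + u) - g x)
      = ∫ θ in (0:ℝ)..1, θ * fderiv ℝ (fderiv ℝ g) (x + θ • u) u u := by
  have hi1 : IntervalIntegrable (fun θ : ℝ => fderiv ℝ (fderiv ℝ g) (x + θ • u) u u)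
      volume 0 1 := (lineDeriv1_cont hg x u).intervalIntegrable 0 1
  have hi2 : IntervalIntegrable (fun θ : ℝ => (1 - θ) * fderiv ℝ (fderiv ℝ g) (x + θ • u) u u)
      volume 0 1 :=
    ((continuous_const.sub continuous_id).mul (lineDeriv1_cont hg x u)).intervalIntegrable 0 1
  have h3 : (∫ θ in (0:ℝ)..1, θ * fderiv ℝ (fderiv ℝ g) (x + θ • u) u u)
      = (∫ θ in (0:ℝ)..1, fderiv ℝ (fderiv ℝ g) (x + θ • u) u u)
        - ∫ θ in (0:ℝ)..1, (1 - θ) * fderiv ℝ (fderiv ℝ g) (x + θ • u) u u := by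
    rw [← intervalIntegral.integral_sub hi1 hi2]
    apply intervalIntegral.integral_congr
    intro θ _; ring
  rw [h3, ← taylor1 hg x u, ← taylor2 hg x u]; ring

lemma convex_tangent_le {g : E d → ℝ} (hcv : ConvexOn ℝ univ g)
    (hg : Differentiable ℝ g) (x y : E d) :
    g x + fderiv ℝ g x (y - x) ≤ g y := by
  set v := y - x with hv
  have hφ : HasDerivAt (fun s : ℝ => g (x + s • v)) (fderiv ℝ g x v) 0 := by
    have := ((hg (x + (0:ℝ) • v)).hasFDerivAt).comp_hasDerivAt 0 (line_hasDerivAt x v 0)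
    simpa [Function.comp_def] using this
  have hcφ : ConvexOn ℝ univ (fun s : ℝ => g (x + s • v)) := by
    have h := hcv.comp_affineMap (AffineMap.lineMap x y)
    have heq : (g ∘ (AffineMap.lineMap x y)) = fun s : ℝ => g (x + s • v) := by
      funext s
      simp only [Function.comp_apply, AffineMap.lineMap_apply_module, hv]
      congr 1
      module
    rw [heq] at h
    simpa using h
  have hs := hcφ.le_slope_of_hasDerivWithinAt_Ioi (mem_univ (0:ℝ)) (mem_univ (1:ℝ)) one_pos
    hφ.hasDerivWithinAt
  rw [slope_def_field] at hs
  have hxy : x + (1:ℝ) • v = y := by rw [hv]; module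
  rw [hxy] at hs
  simp only [zero_smul, add_zero] at hs
  have : (g y - g x) / (1 - 0) = g y - g x := by norm_num
  rw [this] at hs
  linarith

end ScalarCalc

section ProjCalc
variable {d k : ℕ}

lemma fderiv_proj {F : E d → E k} (hF : Differentiable ℝ F) (j : Fin k) (y : E d) :
    fderiv ℝ (fun x => F x j) y = (EuclideanSpace.proj j).comp (fderiv ℝ F y) := by
  have h := ((EuclideanSpace.proj (𝕜 := ℝ) j).hasFDerivAt (x := F y)).comp y (hF y).hasFDerivAt
  exact h.fderiv

lemma fderiv_proj_apply {F : E d → E k} (hF : Differentiable ℝ F) (j : Fin k) (y v : E d) :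
    fderiv ℝ (fun x => F x j) y v = fderiv ℝ F y v j := by
  rw [fderiv_proj hF j y]; rfl

lemma fderiv2_proj {F : E d → E k} (hF : ContDiff ℝ 2 F) (j : Fin k) (y v w : E d) :
    fderiv ℝ (fderiv ℝ (fun x => F x j)) y v w = fderiv ℝ (fderiv ℝ F) y v w j := by
  have hdF : Differentiable ℝ F := hF.differentiable (by norm_num)
  set B : (E d →L[ℝ] E k) →L[ℝ] (E d →L[ℝ] ℝ) :=
    ContinuousLinearMap.compL ℝ (E d) (E k) ℝ (EuclideanSpace.proj j) with hB
  have heq : (fderiv ℝ (fun x => F x j)) = fun z => B (fderiv ℝ F z) := by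
    funext z; rw [fderiv_proj hdF j z]; rfl
  have hd2 : DifferentiableAt ℝ (fderiv ℝ F) y :=
    ((hF.fderiv_right (m := 1) (by norm_num)).differentiable one_ne_zero) y
  have h : HasFDerivAt (fun z => B (fderiv ℝ F z))
      (B.comp (fderiv ℝ (fderiv ℝ F) y)) y := B.hasFDerivAt.comp y hd2.hasFDerivAt
  rw [heq, h.fderiv]; rfl

lemma enorm_le_sum_abs (w : E k) : ‖w‖ ≤ ∑ i, ‖w i‖ := by
  rw [EuclideanSpace.norm_eq]
  have h1 : ∑ i, ‖w i‖ ^ 2 ≤ (∑ i, ‖w i‖) ^ 2 :=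
    Finset.sum_sq_le_sq_sum_of_nonneg (fun i _ => norm_nonneg _)
  calc Real.sqrt (∑ i, ‖w i‖ ^ 2) ≤ Real.sqrt ((∑ i, ‖w i‖) ^ 2) := Real.sqrt_le_sqrt h1
    _ = ∑ i, ‖w i‖ := Real.sqrt_sq (by positivity)

end ProjCalc

section HessCalc
variable {d : ℕ}

lemma hessOp_eq {g : E d → ℝ} (hg : ContDiff ℝ 2 g) (y : E d) :
    hessOp g y
      = ((InnerProductSpace.toDual ℝ (E d)).symm.toContinuousLinearEquiv
          : StrongDual ℝ (E d) ≃L[ℝ] E d).toContinuousLinearMap.comp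
        (fderiv ℝ (fderiv ℝ g) y) := by
  set A := ((InnerProductSpace.toDual ℝ (E d)).symm.toContinuousLinearEquiv
      : StrongDual ℝ (E d) ≃L[ℝ] E d).toContinuousLinearMap with hA
  have hd : DifferentiableAt ℝ (fderiv ℝ g) y :=
    ((hg.fderiv_right (m := 1) (by norm_num)).differentiable one_ne_zero) y
  have h : HasFDerivAt (fun z => A (fderiv ℝ g z))
      (A.comp (fderiv ℝ (fderiv ℝ g) y)) y := A.hasFDerivAt.comp y hd.hasFDerivAt
  have hgrad : (gradient g) = fun z => A (fderiv ℝ g z) := rfl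
  rw [hessOp, hgrad, h.fderiv]

lemma inner_hessOp {g : E d → ℝ} (hg : ContDiff ℝ 2 g) (y u : E d) :
    ⟪hessOp g y u, u⟫ = fderiv ℝ (fderiv ℝ g) y u u := by
  rw [hessOp_eq hg y]
  exact InnerProductSpace.toDual_symm_apply

lemma hessOp_line_cont {g : E d → ℝ} (hg : ContDiff ℝ 2 g) (x u : E d) :
    Continuous fun θ : ℝ => hessOp g (x + θ • u) := by
  have : (fun θ : ℝ => hessOp g (x + θ • u)) = fun θ : ℝ =>
      (((InnerProductSpace.toDual ℝ (E d)).symm.toContinuousLinearEquiv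
        : StrongDual ℝ (E d) ≃L[ℝ] E d).toContinuousLinearMap).comp
        (fderiv ℝ (fderiv ℝ g) (x + θ • u)) := by
    funext θ; exact hessOp_eq hg _
  rw [this]
  exact continuous_const.clm_comp ((fderiv2_cont hg).comp (by continuity))

lemma inner_integral_hessOp {g : E d → ℝ} (hg : ContDiff ℝ 2 g) (x u : E d)
    (ρ : ℝ → ℝ) (hρ : Continuous ρ) :
    ⟪(∫ θ in (0:ℝ)..1, ρ θ • hessOp g (x + θ • u)) u, u⟫
      = ∫ θ in (0:ℝ)..1, ρ θ * fderiv ℝ (fderiv ℝ g) (x + θ • u) u u := by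
  have hcont : Continuous fun θ : ℝ => ρ θ • hessOp g (x + θ • u) :=
    hρ.smul (hessOp_line_cont hg x u)
  rw [ContinuousLinearMap.intervalIntegral_apply (hcont.intervalIntegrable 0 1) u]
  have hcont2 : Continuous fun θ : ℝ => (ρ θ • hessOp g (x + θ • u)) u :=
    hcont.clm_apply continuous_const
  have h2 : ⟪∫ θ in (0:ℝ)..1, (ρ θ • hessOp g (x + θ • u)) u, u⟫
      = ∫ θ in (0:ℝ)..1, ⟪(ρ θ • hessOp g (x + θ • u)) u, u⟫ := by
    have hcc := (innerSL ℝ u).intervalIntegral_comp_comm (μ := volume) (hcont2.intervalIntegrable 0 1)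
    calc ⟪∫ θ in (0:ℝ)..1, (ρ θ • hessOp g (x + θ • u)) u, u⟫
        = (innerSL ℝ u) (∫ θ in (0:ℝ)..1, (ρ θ • hessOp g (x + θ • u)) u) := by
          rw [innerSL_apply_apply]; exact real_inner_comm _ _
      _ = ∫ θ in (0:ℝ)..1, (innerSL ℝ u) ((ρ θ • hessOp g (x + θ • u)) u) := hcc.symm
      _ = ∫ θ in (0:ℝ)..1, ⟪(ρ θ • hessOp g (x + θ • u)) u, u⟫ := by
          apply intervalIntegral.integral_congr
          intro θ _
          exact real_inner_comm ((ρ θ • hessOp g (x + θ • u)) u) u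
  rw [h2]
  apply intervalIntegral.integral_congr
  intro θ _
  simp only [ContinuousLinearMap.smul_apply, real_inner_smul_left]
  rw [inner_hessOp hg]

end HessCalc

section MinMax
variable {d : ℕ}

lemma lambdaMin_le_inner (A : E d →L[ℝ] E d) {h : E d} (hh : ‖h‖ = 1) :
    lambdaMin A ≤ ⟪A h, h⟫ := by
  apply ciInf_le ?_ (⟨h, hh⟩ : {h : E d // ‖h‖ = 1})
  refine ⟨-‖A‖, ?_⟩
  rintro y ⟨⟨h', hh'⟩, rfl⟩
  have h1 := abs_real_inner_le_norm (A h') h'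
  have h2 := A.le_opNorm h'
  rw [hh'] at h1 h2
  simp only [mul_one] at h1 h2
  have := neg_abs_le ⟪A h', h'⟫
  simp only
  linarith

lemma lambdaMin_quad (A : E d →L[ℝ] E d) (u : E d) :
    lambdaMin A * ‖u‖ ^ 2 ≤ ⟪A u, u⟫ := by
  rcases eq_or_ne u 0 with rfl | hu
  · simp
  · have hn : 0 < ‖u‖ := norm_pos_iff.mpr hu
    have hh : ‖(‖u‖⁻¹ • u)‖ = 1 := by
      rw [norm_smul]; simp [abs_of_pos (inv_pos.mpr hn), inv_mul_cancel₀ hn.ne']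
    have h1 := lambdaMin_le_inner A hh
    have h2 : ⟪A (‖u‖⁻¹ • u), ‖u‖⁻¹ • u⟫ = ‖u‖⁻¹ * (‖u‖⁻¹ * ⟪A u, u⟫) := by
      rw [_root_.map_smul, real_inner_smul_left, real_inner_smul_right]
    rw [h2] at h1
    have h3 := mul_le_mul_of_nonneg_right h1 (le_of_lt (by positivity : (0:ℝ) < ‖u‖ ^ 2))
    have hne : ‖u‖ ≠ 0 := hn.ne'
    have h4 : ‖u‖⁻¹ * (‖u‖⁻¹ * ⟪A u, u⟫) * ‖u‖ ^ 2 = ⟪A u, u⟫ := by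
      rw [pow_two]
      calc ‖u‖⁻¹ * (‖u‖⁻¹ * ⟪A u, u⟫) * (‖u‖ * ‖u‖)
          = (‖u‖⁻¹ * ‖u‖) * ((‖u‖⁻¹ * ‖u‖) * ⟪A u, u⟫) := by ring
        _ = ⟪A u, u⟫ := by rw [inv_mul_cancel₀ hne]; ring
    rw [h4] at h3
    exact h3

end MinMax




section MncBound
variable {n m : ℕ}

lemma Mnc_nonneg {S : ℝ} (hS : 0 ≤ S) (fnc : E n → ℝ → E m) (xs : ℝ → E n)
    {δ : ℝ} (hδ : 0 ≤ δ) : 0 ≤ Mnc S fnc xs δ := by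
  by_cases hb : BddAbove (range fun p : {q : ℝ × E n // q.1 ∈ Icc 0 S ∧ ‖q.2‖ ≤ δ} =>
    ‖fderiv ℝ (fderiv ℝ (fun x => fnc x p.1.1)) (xs p.1.1 + p.1.2)‖)
  · exact le_trans (ContinuousLinearMap.opNorm_nonneg _)
      (le_ciSup hb ⟨(0, 0), ⟨left_mem_Icc.mpr hS, by simpa using hδ⟩⟩)
  · rw [Mnc, Real.iSup_of_not_bddAbove hb]

lemma le_Mnc {S δ : ℝ} {fnc : E n → ℝ → E m} {xs : ℝ → E n}
    (hxs : ContinuousOn xs (Icc 0 S))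
    (hfnc2 : ∀ t ∈ Icc 0 S, ContDiff ℝ 2 fun x => fnc x t)
    (hH : ∀ i : Fin m, ContinuousOn
      (fun p : E n × ℝ => fderiv ℝ (fderiv ℝ fun x => fnc x p.2 i) p.1) (univ ×ˢ Icc 0 S))
    {t : ℝ} (ht : t ∈ Icc 0 S) {v : E n} (hv : ‖v‖ ≤ δ) :
    ‖fderiv ℝ (fderiv ℝ (fun x => fnc x t)) (xs t + v)‖ ≤ Mnc S fnc xs δ := by
  have hK : IsCompact ((Icc (0:ℝ) S) ×ˢ (closedBall (0:E n) δ)) :=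
    isCompact_Icc.prod (isCompact_closedBall 0 δ)
  have hφ : ContinuousOn (fun q : ℝ × E n => (xs q.1 + q.2, q.1))
      ((Icc (0:ℝ) S) ×ˢ (closedBall (0:E n) δ)) := by
    apply ContinuousOn.prodMk
    · exact ((hxs.comp continuousOn_fst fun q hq => hq.1).add continuousOn_snd)
    · exact continuousOn_fst
  have hmaps : MapsTo (fun q : ℝ × E n => (xs q.1 + q.2, q.1))
      ((Icc (0:ℝ) S) ×ˢ (closedBall (0:E n) δ)) (univ ×ˢ Icc 0 S) :=
    fun q hq => ⟨trivial, hq.1⟩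
  have hCs : ∀ i : Fin m, ∃ C : ℝ, ∀ q ∈ (Icc (0:ℝ) S) ×ˢ (closedBall (0:E n) δ),
      ‖fderiv ℝ (fderiv ℝ fun x => fnc x q.1 i) (xs q.1 + q.2)‖ ≤ C := by
    intro i
    obtain ⟨C, hC⟩ := hK.exists_bound_of_continuousOn (E := E n →L[ℝ] E n →L[ℝ] ℝ) ((hH i).comp hφ hmaps)
    exact ⟨C, fun q hq => hC q hq⟩
  choose C hC using hCs
  have hM0 : (0:ℝ) ≤ ∑ i, max (C i) 0 :=
    Finset.sum_nonneg fun i _ => le_max_right _ _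
  have hbd : ∀ q ∈ (Icc (0:ℝ) S) ×ˢ (closedBall (0:E n) δ),
      ‖fderiv ℝ (fderiv ℝ fun x => fnc x q.1) (xs q.1 + q.2)‖ ≤ ∑ i, max (C i) 0 := by
    intro q hq
    apply ContinuousLinearMap.opNorm_le_bound _ hM0 (fun a => ?_)
    apply ContinuousLinearMap.opNorm_le_bound _ (mul_nonneg hM0 (norm_nonneg a)) (fun b => ?_)
    calc ‖fderiv ℝ (fderiv ℝ fun x => fnc x q.1) (xs q.1 + q.2) a b‖
        ≤ ∑ i, ‖fderiv ℝ (fderiv ℝ fun x => fnc x q.1) (xs q.1 + q.2) a b i‖ :=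
          enorm_le_sum_abs _
      _ ≤ ∑ i, max (C i) 0 * ‖a‖ * ‖b‖ := by
          apply Finset.sum_le_sum
          intro i _
          have hcomp := fderiv2_proj (hfnc2 q.1 hq.1) i (xs q.1 + q.2) a b
          rw [← hcomp]
          calc ‖fderiv ℝ (fderiv ℝ fun x => fnc x q.1 i) (xs q.1 + q.2) a b‖
              ≤ ‖fderiv ℝ (fderiv ℝ fun x => fnc x q.1 i) (xs q.1 + q.2)‖ * ‖a‖ * ‖b‖ :=
                ContinuousLinearMap.le_opNorm₂ _ a b
            _ ≤ max (C i) 0 * ‖a‖ * ‖b‖ := by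
                have h := le_trans (hC i q hq) (le_max_left (C i) 0)
                gcongr
      _ = (∑ i, max (C i) 0) * ‖a‖ * ‖b‖ := by rw [Finset.sum_mul, Finset.sum_mul]
  have hbdd : BddAbove (range fun p : {q : ℝ × E n // q.1 ∈ Icc 0 S ∧ ‖q.2‖ ≤ δ} =>
      ‖fderiv ℝ (fderiv ℝ (fun x => fnc x p.1.1)) (xs p.1.1 + p.1.2)‖) := by
    refine ⟨∑ i, max (C i) 0, ?_⟩
    rintro y ⟨⟨q, hq1, hq2⟩, rfl⟩
    exact hbd q ⟨hq1, by simpa [mem_closedBall, dist_eq_norm] using hq2⟩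
  exact le_ciSup hbdd ⟨(t, v), ⟨ht, hv⟩⟩

end MncBound




section Key
variable {n m : ℕ}

lemma inner_gradient_eq {d : ℕ} (g : E d → ℝ) (y v : E d) :
    ⟪gradient g y, v⟫ = fderiv ℝ g y v :=
  InnerProductSpace.toDual_symm_apply

lemma inner_integral_hessOp' {d : ℕ} {g : E d → ℝ} (hg : ContDiff ℝ 2 g) (x u : E d) :
    ⟪(∫ θ in (0:ℝ)..1, hessOp g (x + θ • u)) u, u⟫
      = ∫ θ in (0:ℝ)..1, fderiv ℝ (fderiv ℝ g) (x + θ • u) u u := by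
  have h := inner_integral_hessOp hg x u (fun _ => 1) continuous_const
  simpa using h

set_option maxHeartbeats 1000000 in
lemma key_coercivity (P : Problem n m) (xs : ℝ → E n) (ls : ℝ → E m)
    (hxs : ContinuousOn xs (Icc 0 P.S)) (δ η : ℝ) (hδ : 0 ≤ δ) (hη : 0 < η)
    (hgap : Real.sqrt η / 2 * δ * Mnc P.S P.fnc xs δ < LambdaM P.S P.c P.fc P.fnc xs ls δ)
    (t : ℝ) (ht : t ∈ Icc 0 P.S) (u : E n) (hu : ‖u‖ ≤ δ)
    (d : E m) (hd : ‖d‖ ≤ Real.sqrt η * δ) (hlam : ls t + d ∈ orthant m) :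
    (LambdaM P.S P.c P.fc P.fnc xs ls δ - Real.sqrt η / 2 * δ * Mnc P.S P.fnc xs δ) * ‖u‖ ^ 2
      ≤ ⟪gradient (fun y => P.c y t) (xs t + u)
            + ContinuousLinearMap.adjoint (fderiv ℝ (fun y => P.f y t) (xs t + u)) (ls t + d)
          - (gradient (fun y => P.c y t) (xs t)
            + ContinuousLinearMap.adjoint (fderiv ℝ (fun y => P.f y t) (xs t)) (ls t)), u⟫
        + ⟪d, P.f (xs t) t - P.f (xs t + u) t⟫ := by
  classical
  have hc2 : ContDiff ℝ 2 (fun y => P.c y t) := P.hc t ht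
  have hfc2 : ContDiff ℝ 2 (fun y => P.fc y t) := P.hfc t ht
  have hfnc2 : ContDiff ℝ 2 (fun y => P.fnc y t) := P.hfnc t ht
  have hfcj : ∀ j : Fin m, ContDiff ℝ 2 (fun y => P.fc y t j) := fun j =>
    ((EuclideanSpace.proj (𝕜 := ℝ) j).contDiff).comp hfc2
  have hfncj : ∀ j : Fin m, ContDiff ℝ 2 (fun y => P.fnc y t j) := fun j =>
    ((EuclideanSpace.proj (𝕜 := ℝ) j).contDiff).comp hfnc2
  have hffun : (fun y => P.f y t) = fun y => P.fc y t + P.fnc y t := rfl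
  have hf2 : ContDiff ℝ 2 (fun y => P.f y t) := by rw [hffun]; exact hfc2.add hfnc2
  have hfj : ∀ j : Fin m, ContDiff ℝ 2 (fun y => P.f y t j) := fun j =>
    ((EuclideanSpace.proj (𝕜 := ℝ) j).contDiff).comp hf2
  set x := xs t with hxdef
  set lam := ls t with hlamdef
  set Λ := LambdaM P.S P.c P.fc P.fnc xs ls δ with hΛdef
  set M := Mnc P.S P.fnc xs δ with hMdef
  have hM0 : 0 ≤ M := Mnc_nonneg P.hS.le P.fnc xs hδ
  -- scalar quantities
  -- Step 1 : rewrite the right-hand side componentwise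
  have hJb : ∀ j : Fin m, fderiv ℝ (fun y => P.f y t) (x + u) u j
      = fderiv ℝ (fun y => P.f y t j) (x + u) u :=
    fun j => (fderiv_proj_apply (hf2.differentiable (by norm_num)) j (x + u) u).symm
  have hJ0 : ∀ j : Fin m, fderiv ℝ (fun y => P.f y t) x u j
      = fderiv ℝ (fun y => P.f y t j) x u :=
    fun j => (fderiv_proj_apply (hf2.differentiable (by norm_num)) j x u).symm
  have hRHS : ⟪gradient (fun y => P.c y t) (x + u)
            + ContinuousLinearMap.adjoint (fderiv ℝ (fun y => P.f y t) (x + u)) (lam + d)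
          - (gradient (fun y => P.c y t) x
            + ContinuousLinearMap.adjoint (fderiv ℝ (fun y => P.f y t) x) lam), u⟫
        + ⟪d, P.f x t - P.f (x + u) t⟫
      = (fderiv ℝ (fun y => P.c y t) (x + u) u - fderiv ℝ (fun y => P.c y t) x u)
        + (∑ j, (lam + d) j * fderiv ℝ (fun y => P.f y t j) (x + u) u)
        - (∑ j, lam j * fderiv ℝ (fun y => P.f y t j) x u)
        + (∑ j, d j * (P.f x t j - P.f (x + u) t j)) := by
    rw [inner_sub_left, inner_add_left, inner_add_left,
      ContinuousLinearMap.adjoint_inner_left, ContinuousLinearMap.adjoint_inner_left,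
      inner_gradient_eq, inner_gradient_eq]
    have e1 : ⟪lam + d, fderiv ℝ (fun y => P.f y t) (x + u) u⟫
        = ∑ j, (lam + d) j * fderiv ℝ (fun y => P.f y t j) (x + u) u := by
      rw [PiLp.inner_apply]
      exact Finset.sum_congr rfl fun j _ => by rw [hJb j]; simp [RCLike.inner_apply, mul_comm]
    have e2 : ⟪lam, fderiv ℝ (fun y => P.f y t) x u⟫
        = ∑ j, lam j * fderiv ℝ (fun y => P.f y t j) x u := by
      rw [PiLp.inner_apply]
      exact Finset.sum_congr rfl fun j _ => by rw [hJ0 j]; simp [RCLike.inner_apply, mul_comm]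
    have e3 : ⟪d, P.f x t - P.f (x + u) t⟫ = ∑ j, d j * (P.f x t j - P.f (x + u) t j) := by
      rw [PiLp.inner_apply]
      refine Finset.sum_congr rfl fun j _ => ?_
      simp only [PiLp.sub_apply, RCLike.inner_apply, conj_trivial, mul_comm]
    rw [e1, e2, e3]; ring
  -- Step 2 : regroup the sums
  have hregroup : (∑ j, (lam + d) j * fderiv ℝ (fun y => P.f y t j) (x + u) u)
        - (∑ j, lam j * fderiv ℝ (fun y => P.f y t j) x u)
        + (∑ j, d j * (P.f x t j - P.f (x + u) t j))
      = (∑ j, (lam + d) j * (fderiv ℝ (fun y => P.f y t j) (x + u) u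
            + P.f x t j - P.f (x + u) t j))
        + (∑ j, lam j * (P.f (x + u) t j - P.f x t j
            - fderiv ℝ (fun y => P.f y t j) x u)) := by
    rw [← Finset.sum_sub_distrib, ← Finset.sum_add_distrib, ← Finset.sum_add_distrib]
    apply Finset.sum_congr rfl
    intro j _
    have hlj : (lam + d) j = lam j + d j := rfl
    rw [hlj]; ring
  -- Step 3 : pointwise Taylor decompositions
  have hdfc : ∀ j : Fin m, Differentiable ℝ (fun y => P.fc y t j) :=
    fun j => (hfcj j).differentiable (by norm_num)
  have hdfnc : ∀ j : Fin m, Differentiable ℝ (fun y => P.fnc y t j) :=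
    fun j => (hfncj j).differentiable (by norm_num)
  have hsplitJ : ∀ (y : E n) (j : Fin m), fderiv ℝ (fun y' => P.f y' t j) y u
      = fderiv ℝ (fun y' => P.fc y' t j) y u + fderiv ℝ (fun y' => P.fnc y' t j) y u := by
    intro y j
    have h0 : (fun y' => P.f y' t j) = fun y' => P.fc y' t j + P.fnc y' t j := rfl
    rw [h0, fderiv_fun_add ((hdfc j) y) ((hdfnc j) y)]
    rfl
  have h2a : ∀ j : Fin m, fderiv ℝ (fun y => P.f y t j) (x + u) u
        + P.f x t j - P.f (x + u) t j
      = (fderiv ℝ (fun y => P.fc y t j) (x + u) u + P.fc x t j - P.fc (x + u) t j)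
        + ∫ θ in (0:ℝ)..1, θ * fderiv ℝ (fderiv ℝ fun y => P.fnc y t j) (x + θ • u) u u := by
    intro j
    have ht2' := taylor2' (hfncj j) x u
    have hb : P.f (x + u) t j = P.fc (x + u) t j + P.fnc (x + u) t j := rfl
    have h0 : P.f x t j = P.fc x t j + P.fnc x t j := rfl
    rw [hsplitJ (x + u) j, hb, h0]
    linarith [ht2']
  have h2b : ∀ j : Fin m, P.f (x + u) t j - P.f x t j
        - fderiv ℝ (fun y => P.f y t j) x u
      = (∫ θ in (0:ℝ)..1, (1 - θ) * fderiv ℝ (fderiv ℝ fun y => P.fc y t j) (x + θ • u) u u)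
        + ∫ θ in (0:ℝ)..1, (1 - θ) * fderiv ℝ (fderiv ℝ fun y => P.fnc y t j) (x + θ • u) u u := by
    intro j
    have ht2c := taylor2 (hfcj j) x u
    have ht2nc := taylor2 (hfncj j) x u
    have hb : P.f (x + u) t j = P.fc (x + u) t j + P.fnc (x + u) t j := rfl
    have h0 : P.f x t j = P.fc x t j + P.fnc x t j := rfl
    rw [hsplitJ x j, hb, h0]
    linarith [ht2c, ht2nc]
  have h2c : ∀ j : Fin m, 0 ≤ (lam + d) j
      * (fderiv ℝ (fun y => P.fc y t j) (x + u) u + P.fc x t j - P.fc (x + u) t j) := by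
    intro j
    have h0 : 0 ≤ (lam + d) j := hlam j
    have hcv := convex_tangent_le (P.hconv t ht j) (hdfc j) (x + u) x
    have hxu : x - (x + u) = -u := by abel
    rw [hxu, (fderiv ℝ (fun y => P.fc y t j) (x + u)).map_neg] at hcv
    apply mul_nonneg h0
    linarith
  -- Step 4 : combining the θ- and (1-θ)-weighted nonconvex integrals
  have hQnc_cont : ∀ j : Fin m,
      Continuous fun θ : ℝ => fderiv ℝ (fderiv ℝ fun y => P.fnc y t j) (x + θ • u) u u :=
    fun j => lineDeriv1_cont (hfncj j) x u
  have hone : ∀ j : Fin m,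
      (∫ θ in (0:ℝ)..1, θ * fderiv ℝ (fderiv ℝ fun y => P.fnc y t j) (x + θ • u) u u)
        + (∫ θ in (0:ℝ)..1, (1 - θ) * fderiv ℝ (fderiv ℝ fun y => P.fnc y t j) (x + θ • u) u u)
      = ∫ θ in (0:ℝ)..1, fderiv ℝ (fderiv ℝ fun y => P.fnc y t j) (x + θ • u) u u := by
    intro j
    rw [← intervalIntegral.integral_add
      ((continuous_id'.fun_mul (hQnc_cont j)).intervalIntegrable 0 1)
      (((continuous_const.fun_sub continuous_id').fun_mul (hQnc_cont j)).intervalIntegrable 0 1)]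
    apply intervalIntegral.integral_congr
    intro θ _
    ring
  -- Step 5 : identification with the HbarL quadratic form
  have hinner2 : ContDiff ℝ 2 (fun y => (⟪lam, P.fnc y t⟫ : ℝ)) :=
    ContDiff.inner ℝ contDiff_const hfnc2
  have hLnc2 : ContDiff ℝ 2 (fun y => Lnc P.c P.fnc y lam t) := by
    have h0 : (fun y => Lnc P.c P.fnc y lam t) = fun y => P.c y t + ⟪lam, P.fnc y t⟫ := rfl
    rw [h0]
    exact hc2.add hinner2
  have hfderivLnc : ∀ y : E n, fderiv ℝ (fun z => Lnc P.c P.fnc z lam t) y u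
      = fderiv ℝ (fun z => P.c z t) y u
        + ∑ j, lam j * fderiv ℝ (fun z => P.fnc z t j) y u := by
    intro y
    have h0 : (fun z => Lnc P.c P.fnc z lam t) = fun z => P.c z t + ⟪lam, P.fnc z t⟫ := rfl
    rw [h0, fderiv_fun_add ((hc2.differentiable (by norm_num)) y)
      ((hinner2.differentiable (by norm_num)) y)]
    simp only [ContinuousLinearMap.add_apply]
    congr 1
    have h2 := fderiv_inner_apply ℝ (differentiableAt_const lam)
      ((hfnc2.differentiable (by norm_num)) y) u
    rw [h2]
    simp only [fderiv_const, fderiv_fun_const, Pi.zero_apply, ContinuousLinearMap.zero_apply,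
      inner_zero_left, add_zero]
    rw [PiLp.inner_apply]
    refine Finset.sum_congr rfl fun j _ => ?_
    rw [fderiv_proj_apply (hfnc2.differentiable (by norm_num)) j y u]
    simp [RCLike.inner_apply, mul_comm]
  have hIntLnc : (∫ θ in (0:ℝ)..1,
        fderiv ℝ (fderiv ℝ fun z => Lnc P.c P.fnc z lam t) (x + θ • u) u u)
      = (∫ θ in (0:ℝ)..1, fderiv ℝ (fderiv ℝ fun y => P.c y t) (x + θ • u) u u)
        + ∑ j, lam j * ∫ θ in (0:ℝ)..1,
            fderiv ℝ (fderiv ℝ fun y => P.fnc y t j) (x + θ • u) u u := by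
    have hTL := taylor1 hLnc2 x u
    have hTc := taylor1 hc2 x u
    calc (∫ θ in (0:ℝ)..1,
          fderiv ℝ (fderiv ℝ fun z => Lnc P.c P.fnc z lam t) (x + θ • u) u u)
        = fderiv ℝ (fun z => Lnc P.c P.fnc z lam t) (x + u) u
          - fderiv ℝ (fun z => Lnc P.c P.fnc z lam t) x u := hTL.symm
      _ = (∫ θ in (0:ℝ)..1, fderiv ℝ (fderiv ℝ fun y => P.c y t) (x + θ • u) u u)
          + ∑ j, lam j * (fderiv ℝ (fun z => P.fnc z t j) (x + u) u
              - fderiv ℝ (fun z => P.fnc z t j) x u) := by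
          rw [hfderivLnc (x + u), hfderivLnc x, ← hTc]
          have hhh : ∑ j, lam j * (fderiv ℝ (fun z => P.fnc z t j) (x + u) u
              - fderiv ℝ (fun z => P.fnc z t j) x u)
            = (∑ j, lam j * fderiv ℝ (fun z => P.fnc z t j) (x + u) u)
              - ∑ j, lam j * fderiv ℝ (fun z => P.fnc z t j) x u := by
            rw [← Finset.sum_sub_distrib]
            exact Finset.sum_congr rfl fun j _ => mul_sub _ _ _
          rw [hhh]
          ring
      _ = (∫ θ in (0:ℝ)..1, fderiv ℝ (fderiv ℝ fun y => P.c y t) (x + θ • u) u u)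
          + ∑ j, lam j * ∫ θ in (0:ℝ)..1,
              fderiv ℝ (fderiv ℝ fun y => P.fnc y t j) (x + θ • u) u u := by
          congr 1
          exact Finset.sum_congr rfl fun j _ => by rw [taylor1 (hfncj j) x u]
  -- Step 6 : quadratic form of the LambdaM operator
  have hHbarL : ⟪(HbarL P.c P.fnc xs ls u t) u, u⟫
      = ∫ θ in (0:ℝ)..1,
          fderiv ℝ (fderiv ℝ fun z => Lnc P.c P.fnc z lam t) (x + θ • u) u u := by
    rw [HbarL]
    exact inner_integral_hessOp' hLnc2 x u
  have hHbarfc : ∀ i : Fin m, ⟪(Hbarfc P.fc xs i u t) u, u⟫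
      = ∫ θ in (0:ℝ)..1,
          (2 * (1 - θ)) * fderiv ℝ (fderiv ℝ fun y => P.fc y t i) (x + θ • u) u u := by
    intro i
    rw [Hbarfc]
    exact inner_integral_hessOp (hfcj i) x u (fun θ => 2 * (1 - θ))
      (continuous_const.mul (continuous_const.sub continuous_id'))
  have hdouble : ∀ i : Fin m,
      (∫ θ in (0:ℝ)..1,
          (2 * (1 - θ)) * fderiv ℝ (fderiv ℝ fun y => P.fc y t i) (x + θ • u) u u)
      = 2 * ∫ θ in (0:ℝ)..1,
          (1 - θ) * fderiv ℝ (fderiv ℝ fun y => P.fc y t i) (x + θ • u) u u := by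
    intro i
    rw [← intervalIntegral.integral_const_mul]
    apply intervalIntegral.integral_congr
    intro θ _
    ring
  have hOpEq : ⟪(HbarL P.c P.fnc xs ls u t
        + (2⁻¹ : ℝ) • ∑ i, ls t i • Hbarfc P.fc xs i u t) u, u⟫
      = (∫ θ in (0:ℝ)..1, fderiv ℝ (fderiv ℝ fun y => P.c y t) (x + θ • u) u u)
        + (∑ j, lam j * ∫ θ in (0:ℝ)..1,
            fderiv ℝ (fderiv ℝ fun y => P.fnc y t j) (x + θ • u) u u)
        + ∑ j, lam j * ∫ θ in (0:ℝ)..1,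
            (1 - θ) * fderiv ℝ (fderiv ℝ fun y => P.fc y t j) (x + θ • u) u u := by
    rw [ContinuousLinearMap.add_apply, inner_add_left, hHbarL, hIntLnc]
    have hsum : ⟪((2⁻¹ : ℝ) • ∑ i, ls t i • Hbarfc P.fc xs i u t) u, u⟫
        = ∑ j, lam j * ∫ θ in (0:ℝ)..1,
            (1 - θ) * fderiv ℝ (fderiv ℝ fun y => P.fc y t j) (x + θ • u) u u := by
      rw [ContinuousLinearMap.smul_apply, real_inner_smul_left,
        ContinuousLinearMap.sum_apply, sum_inner, Finset.mul_sum]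
      refine Finset.sum_congr rfl fun i _ => ?_
      rw [ContinuousLinearMap.smul_apply, real_inner_smul_left, hHbarfc i, hdouble i]
      rw [← hlamdef]
      ring
    rw [hsum]
  -- Step 7: lower bound via LambdaM
  have hsqrtη : (0:ℝ) ≤ Real.sqrt η := Real.sqrt_nonneg η
  have hΛpos : 0 < Λ :=
    lt_of_le_of_lt (mul_nonneg (mul_nonneg (by positivity) hδ) hM0) hgap
  have hbddB : BddBelow (range fun p : {q : ℝ × E n // q.1 ∈ Icc 0 P.S ∧ ‖q.2‖ ≤ δ} =>
      lambdaMin (HbarL P.c P.fnc xs ls p.1.2 p.1.1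
        + (2⁻¹ : ℝ) • ∑ i, ls p.1.1 i • Hbarfc P.fc xs i p.1.2 p.1.1)) := by
    by_contra hb
    have h0 : Λ = 0 := hΛdef.trans (Real.iInf_of_not_bddBelow hb)
    rw [h0] at hΛpos
    exact lt_irrefl 0 hΛpos
  have hinf : Λ ≤ lambdaMin (HbarL P.c P.fnc xs ls u t
      + (2⁻¹ : ℝ) • ∑ i, ls t i • Hbarfc P.fc xs i u t) := by
    rw [hΛdef]
    exact ciInf_le hbddB ⟨(t, u), ht, hu⟩
  have hlow : Λ * ‖u‖ ^ 2
      ≤ ⟪(HbarL P.c P.fnc xs ls u t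
          + (2⁻¹ : ℝ) • ∑ i, ls t i • Hbarfc P.fc xs i u t) u, u⟫ :=
    le_trans (mul_le_mul_of_nonneg_right hinf (by positivity)) (lambdaMin_quad _ u)
  -- Step 8 : the nonconvex error term
  have hD2cont : Continuous fun θ : ℝ =>
      θ • (fderiv ℝ (fderiv ℝ fun y => P.fnc y t) (x + θ • u) u u) := by
    have hline : Continuous fun θ : ℝ => x + θ • u :=
      continuous_const.add (continuous_id'.smul continuous_const)
    have hbase : Continuous fun θ : ℝ =>
        (fderiv ℝ (fderiv ℝ fun y => P.fnc y t) (x + θ • u) u u) :=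
      (((fderiv2_cont hfnc2).comp hline).clm_apply
        continuous_const).clm_apply continuous_const
    exact continuous_id'.smul hbase
  have hVj : ∀ j : Fin m,
      (∫ θ in (0:ℝ)..1, θ • (fderiv ℝ (fderiv ℝ fun y => P.fnc y t) (x + θ • u) u u)) j
      = ∫ θ in (0:ℝ)..1, θ * fderiv ℝ (fderiv ℝ fun y => P.fnc y t j) (x + θ • u) u u := by
    intro j
    have hcc := (EuclideanSpace.proj (𝕜 := ℝ) j).intervalIntegral_comp_comm (μ := volume)
      (hD2cont.intervalIntegrable 0 1)
    calc (∫ θ in (0:ℝ)..1, θ • (fderiv ℝ (fderiv ℝ fun y => P.fnc y t) (x + θ • u) u u)) j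
        = (EuclideanSpace.proj (𝕜 := ℝ) j)
            (∫ θ in (0:ℝ)..1, θ • (fderiv ℝ (fderiv ℝ fun y => P.fnc y t) (x + θ • u) u u)) := rfl
      _ = ∫ θ in (0:ℝ)..1, (EuclideanSpace.proj (𝕜 := ℝ) j)
            (θ • (fderiv ℝ (fderiv ℝ fun y => P.fnc y t) (x + θ • u) u u)) := hcc.symm
      _ = ∫ θ in (0:ℝ)..1, θ * fderiv ℝ (fderiv ℝ fun y => P.fnc y t j) (x + θ • u) u u := by
          apply intervalIntegral.integral_congr
          intro θ _
          simp only [_root_.map_smul, PiLp.proj_apply, smul_eq_mul]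
          rw [fderiv2_proj hfnc2 j (x + θ • u) u u]
  have hdotV : (∑ j, d j * ∫ θ in (0:ℝ)..1,
        θ * fderiv ℝ (fderiv ℝ fun y => P.fnc y t j) (x + θ • u) u u)
      = ⟪d, ∫ θ in (0:ℝ)..1,
          θ • (fderiv ℝ (fderiv ℝ fun y => P.fnc y t) (x + θ • u) u u)⟫ := by
    rw [PiLp.inner_apply]
    refine Finset.sum_congr rfl fun j _ => ?_
    rw [← hVj j]
    simp [RCLike.inner_apply, mul_comm]
  have hMbound : ∀ θ ∈ Icc (0:ℝ) 1,
      ‖θ • (fderiv ℝ (fderiv ℝ fun y => P.fnc y t) (x + θ • u) u u)‖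
        ≤ θ * (M * ‖u‖ ^ 2) := by
    intro θ hθ
    rw [norm_smul, Real.norm_eq_abs, abs_of_nonneg hθ.1]
    apply mul_le_mul_of_nonneg_left _ hθ.1
    have hθu : ‖θ • u‖ ≤ δ := by
      rw [norm_smul, Real.norm_eq_abs, abs_of_nonneg hθ.1]
      calc θ * ‖u‖ ≤ 1 * δ := mul_le_mul hθ.2 hu (norm_nonneg u) zero_le_one
        _ = δ := one_mul δ
    have hMle : ‖fderiv ℝ (fderiv ℝ fun y => P.fnc y t) (x + θ • u)‖ ≤ M := by
      rw [hMdef, hxdef]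
      exact le_Mnc hxs (fun s hs => P.hfnc s hs) P.hfncHess ht hθu
    calc ‖fderiv ℝ (fderiv ℝ fun y => P.fnc y t) (x + θ • u) u u‖
        ≤ ‖fderiv ℝ (fderiv ℝ fun y => P.fnc y t) (x + θ • u)‖ * ‖u‖ * ‖u‖ :=
          ContinuousLinearMap.le_opNorm₂ _ u u
      _ ≤ M * ‖u‖ * ‖u‖ := by gcongr
      _ = M * ‖u‖ ^ 2 := by ring
  have hnormV : ‖∫ θ in (0:ℝ)..1,
        θ • (fderiv ℝ (fderiv ℝ fun y => P.fnc y t) (x + θ • u) u u)‖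
      ≤ M * ‖u‖ ^ 2 / 2 := by
    have h6 := intervalIntegral.norm_integral_le_integral_norm
      (f := fun θ : ℝ => θ • (fderiv ℝ (fderiv ℝ fun y => P.fnc y t) (x + θ • u) u u))
      (μ := volume) (a := 0) (b := 1) zero_le_one
    have h7 : (∫ θ in (0:ℝ)..1,
          ‖θ • (fderiv ℝ (fderiv ℝ fun y => P.fnc y t) (x + θ • u) u u)‖)
        ≤ ∫ θ in (0:ℝ)..1, θ * (M * ‖u‖ ^ 2) :=
      intervalIntegral.integral_mono_on zero_le_one
        (hD2cont.norm.intervalIntegrable 0 1)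
        ((continuous_id'.mul continuous_const).intervalIntegrable 0 1)
        hMbound
    have h8 : (∫ θ in (0:ℝ)..1, θ * (M * ‖u‖ ^ 2)) = M * ‖u‖ ^ 2 / 2 := by
      rw [intervalIntegral.integral_mul_const, integral_id]
      ring
    rw [h8] at h7
    exact le_trans h6 h7
  have hdnonneg : (0:ℝ) ≤ Real.sqrt η * δ := mul_nonneg hsqrtη hδ
  have hErr : -(Real.sqrt η * δ * (M * ‖u‖ ^ 2 / 2))
      ≤ ∑ j, d j * ∫ θ in (0:ℝ)..1,
          θ * fderiv ℝ (fderiv ℝ fun y => P.fnc y t j) (x + θ • u) u u := by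
    rw [hdotV]
    set V := ∫ θ in (0:ℝ)..1,
      θ • (fderiv ℝ (fderiv ℝ fun y => P.fnc y t) (x + θ • u) u u) with hVdef
    have h1 := abs_real_inner_le_norm d V
    have h2 : ‖d‖ * ‖V‖ ≤ (Real.sqrt η * δ) * (M * ‖u‖ ^ 2 / 2) := by
      apply mul_le_mul hd hnormV (norm_nonneg V) hdnonneg
    have h3 := neg_abs_le ⟪d, V⟫
    linarith
  -- Step 9: final assembly
  rw [hRHS]
  have hTc := taylor1 hc2 x u
  have hrw1 : (∑ j, (lam + d) j * (fderiv ℝ (fun y => P.f y t j) (x + u) u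
        + P.f x t j - P.f (x + u) t j))
      = (∑ j, (lam + d) j * ((fderiv ℝ (fun y => P.fc y t j) (x + u) u
          + P.fc x t j - P.fc (x + u) t j)
        + ∫ θ in (0:ℝ)..1, θ * fderiv ℝ (fderiv ℝ fun y => P.fnc y t j) (x + θ • u) u u)) :=
    Finset.sum_congr rfl fun j _ => by rw [h2a j]
  have hrw2 : (∑ j, lam j * (P.f (x + u) t j - P.f x t j
        - fderiv ℝ (fun y => P.f y t j) x u))
      = (∑ j, lam j * ((∫ θ in (0:ℝ)..1,
            (1 - θ) * fderiv ℝ (fderiv ℝ fun y => P.fc y t j) (x + θ • u) u u)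
        + ∫ θ in (0:ℝ)..1,
            (1 - θ) * fderiv ℝ (fderiv ℝ fun y => P.fnc y t j) (x + θ • u) u u)) :=
    Finset.sum_congr rfl fun j _ => by rw [h2b j]
  -- expand the sums
  have hexp1 : (∑ j, (lam + d) j * ((fderiv ℝ (fun y => P.fc y t j) (x + u) u
          + P.fc x t j - P.fc (x + u) t j)
        + ∫ θ in (0:ℝ)..1, θ * fderiv ℝ (fderiv ℝ fun y => P.fnc y t j) (x + θ • u) u u))
      = (∑ j, (lam + d) j * (fderiv ℝ (fun y => P.fc y t j) (x + u) u
          + P.fc x t j - P.fc (x + u) t j))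
        + (∑ j, lam j * ∫ θ in (0:ℝ)..1,
            θ * fderiv ℝ (fderiv ℝ fun y => P.fnc y t j) (x + θ • u) u u)
        + (∑ j, d j * ∫ θ in (0:ℝ)..1,
            θ * fderiv ℝ (fderiv ℝ fun y => P.fnc y t j) (x + θ • u) u u) := by
    rw [← Finset.sum_add_distrib, ← Finset.sum_add_distrib]
    refine Finset.sum_congr rfl fun j _ => ?_
    have hlj : (lam + d) j = lam j + d j := rfl
    rw [hlj]
    ring
  have hexp2 : (∑ j, lam j * ((∫ θ in (0:ℝ)..1,
            (1 - θ) * fderiv ℝ (fderiv ℝ fun y => P.fc y t j) (x + θ • u) u u)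
        + ∫ θ in (0:ℝ)..1,
            (1 - θ) * fderiv ℝ (fderiv ℝ fun y => P.fnc y t j) (x + θ • u) u u))
      = (∑ j, lam j * ∫ θ in (0:ℝ)..1,
            (1 - θ) * fderiv ℝ (fderiv ℝ fun y => P.fc y t j) (x + θ • u) u u)
        + (∑ j, lam j * ∫ θ in (0:ℝ)..1,
            (1 - θ) * fderiv ℝ (fderiv ℝ fun y => P.fnc y t j) (x + θ • u) u u) := by
    rw [← Finset.sum_add_distrib]
    exact Finset.sum_congr rfl fun j _ => mul_add _ _ _
  have hcombine : (∑ j, lam j * ∫ θ in (0:ℝ)..1,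
          θ * fderiv ℝ (fderiv ℝ fun y => P.fnc y t j) (x + θ • u) u u)
        + (∑ j, lam j * ∫ θ in (0:ℝ)..1,
            (1 - θ) * fderiv ℝ (fderiv ℝ fun y => P.fnc y t j) (x + θ • u) u u)
      = ∑ j, lam j * ∫ θ in (0:ℝ)..1,
          fderiv ℝ (fderiv ℝ fun y => P.fnc y t j) (x + θ • u) u u := by
    rw [← Finset.sum_add_distrib]
    refine Finset.sum_congr rfl fun j _ => ?_
    rw [← mul_add, hone j]
  have hScvx : 0 ≤ ∑ j, (lam + d) j * (fderiv ℝ (fun y => P.fc y t j) (x + u) u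
      + P.fc x t j - P.fc (x + u) t j) :=
    Finset.sum_nonneg fun j _ => h2c j
  have hring : Real.sqrt η * δ * (M * ‖u‖ ^ 2 / 2)
      = Real.sqrt η / 2 * δ * M * ‖u‖ ^ 2 := by ring
  linarith [hlow, hOpEq, hErr, hScvx, hcombine, hTc, hregroup, hrw1, hrw2, hexp1, hexp2,
    hring]

end Key


set_option maxHeartbeats 2000000 in
/-- **separation of distinct KKT trajectories.** If `z*_{(1)}` and
`z*_{(2)}` are Lipschitz KKT trajectories with
`Λ_m^{(i)}(δ_i) − (√η/2) δ_i M_nc^{(i)}(δ_i) > 0` for `i = 1,2`, and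
`x*_{(1)}(t) ≠ x*_{(2)}(t)` for some `t ∈ [0,S]`, then
`‖z*_{(1)}(t) − z*_{(2)}(t)‖_η > δ₁ + δ₂`. -/
theorem separation_of_KKT_trajectories {n m : ℕ} (P : Problem n m)
    (x1 : ℝ → E n) (l1 : ℝ → E m) (x2 : ℝ → E n) (l2 : ℝ → E m)
    (h1 : IsKKTTraj P x1 l1) (h2 : IsKKTTraj P x2 l2)
    (δ1 δ2 η : ℝ) (hδ1 : 0 < δ1) (hδ2 : 0 < δ2) (hη : 0 < η)
    (hgap1 : Real.sqrt η / 2 * δ1 * Mnc P.S P.fnc x1 δ1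
      < LambdaM P.S P.c P.fc P.fnc x1 l1 δ1)
    (hgap2 : Real.sqrt η / 2 * δ2 * Mnc P.S P.fnc x2 δ2
      < LambdaM P.S P.c P.fc P.fnc x2 l2 δ2)
    (t : ℝ) (ht : t ∈ Icc (0:ℝ) P.S) (hx : x1 t ≠ x2 t) :
    δ1 + δ2 < etaNorm η ((x1 t, l1 t) - (x2 t, l2 t)) := by
  by_contra hcon
  push_neg at hcon
  obtain ⟨hx1X, hl1o, hnc1, hcp1⟩ := h1.2 t ht
  obtain ⟨hx2X, hl2o, hnc2, hcp2⟩ := h2.2 t ht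
  have horth1mem : l1 t ∈ orthant m := (h1.1.2 t ht).2
  have horth2mem : l2 t ∈ orthant m := (h2.1.2 t ht).2
  set u := x2 t - x1 t with hu_def
  set Δ := l2 t - l1 t with hΔ_def
  have hu0 : u ≠ 0 := sub_ne_zero.mpr (Ne.symm hx)
  have hnu : 0 < ‖u‖ := norm_pos_iff.mpr hu0
  set D := δ1 + δ2 with hDdef
  have hD0 : 0 < D := add_pos hδ1 hδ2
  -- bounds coming from the eta-norm
  have hEta' : Real.sqrt (‖u‖ ^ 2 + η⁻¹ * ‖Δ‖ ^ 2) ≤ D := by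
    have h1' : etaNorm η ((x1 t, l1 t) - (x2 t, l2 t))
        = Real.sqrt (‖u‖ ^ 2 + η⁻¹ * ‖Δ‖ ^ 2) := by
      rw [etaNorm]
      have e1 : ‖((x1 t, l1 t) - (x2 t, l2 t)).1‖ = ‖u‖ := by
        show ‖x1 t - x2 t‖ = ‖u‖
        rw [hu_def, norm_sub_rev]
      have e2 : ‖((x1 t, l1 t) - (x2 t, l2 t)).2‖ = ‖Δ‖ := by
        show ‖l1 t - l2 t‖ = ‖Δ‖
        rw [hΔ_def, norm_sub_rev]
      rw [e1, e2]
    rw [← h1']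
    exact hcon
  have hsq : ‖u‖ ^ 2 + η⁻¹ * ‖Δ‖ ^ 2 ≤ D ^ 2 := by
    have h0 : (0:ℝ) ≤ ‖u‖ ^ 2 + η⁻¹ * ‖Δ‖ ^ 2 := by positivity
    nlinarith [Real.sq_sqrt h0, Real.sqrt_nonneg (‖u‖ ^ 2 + η⁻¹ * ‖Δ‖ ^ 2), hEta', hD0]
  have hnu_le : ‖u‖ ≤ D := by
    nlinarith [hsq, mul_nonneg (le_of_lt (inv_pos.mpr hη)) (sq_nonneg ‖Δ‖), hD0.le,
      norm_nonneg u]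
  have hΔ_le : ‖Δ‖ ≤ Real.sqrt η * D := by
    have h2' : η⁻¹ * ‖Δ‖ ^ 2 ≤ D ^ 2 := by nlinarith [sq_nonneg ‖u‖]
    have h1' : ‖Δ‖ ^ 2 ≤ η * D ^ 2 := by
      calc ‖Δ‖ ^ 2 = η * (η⁻¹ * ‖Δ‖ ^ 2) := by field_simp
        _ ≤ η * D ^ 2 := mul_le_mul_of_nonneg_left h2' hη.le
    have h3' : Real.sqrt (‖Δ‖ ^ 2) ≤ Real.sqrt (η * D ^ 2) := Real.sqrt_le_sqrt h1'
    rwa [Real.sqrt_sq (norm_nonneg Δ), Real.sqrt_mul hη.le, Real.sqrt_sq hD0.le] at h3'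
  -- the midpoint parameter
  set τ := δ1 / D with hτdef
  have hτpos : 0 < τ := div_pos hδ1 hD0
  have hτlt : τ < 1 := (div_lt_one hD0).mpr (by rw [hDdef]; linarith)
  have hτD : τ * D = δ1 := by rw [hτdef]; field_simp
  have h1τD : (1 - τ) * D = δ2 := by
    have : τ * D = δ1 := hτD
    nlinarith [this]
  -- continuity of the trajectories
  have hx1cont : ContinuousOn x1 (Icc 0 P.S) := by
    obtain ⟨L, hL⟩ := h1.1.1
    exact continuous_fst.comp_continuousOn hL.continuousOn
  have hx2cont : ContinuousOn x2 (Icc 0 P.S) := by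
    obtain ⟨L, hL⟩ := h2.1.1
    exact continuous_fst.comp_continuousOn hL.continuousOn
  -- data for the first trajectory
  have hu1 : ‖τ • u‖ ≤ δ1 := by
    rw [norm_smul, Real.norm_eq_abs, abs_of_pos hτpos]
    calc τ * ‖u‖ ≤ τ * D := mul_le_mul_of_nonneg_left hnu_le hτpos.le
      _ = δ1 := hτD
  have hd1 : ‖τ • Δ‖ ≤ Real.sqrt η * δ1 := by
    rw [norm_smul, Real.norm_eq_abs, abs_of_pos hτpos]
    calc τ * ‖Δ‖ ≤ τ * (Real.sqrt η * D) := mul_le_mul_of_nonneg_left hΔ_le hτpos.le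
      _ = Real.sqrt η * (τ * D) := by ring
      _ = Real.sqrt η * δ1 := by rw [hτD]
  have hlam1 : l1 t + τ • Δ ∈ orthant m := by
    intro i
    have hdi : (l1 t + τ • Δ) i = l1 t i + τ * (l2 t i - l1 t i) := by
      simp [hΔ_def, PiLp.add_apply, PiLp.smul_apply, PiLp.sub_apply, smul_eq_mul]
    rw [hdi]
    nlinarith [horth1mem i, horth2mem i, hτpos.le, hτlt.le]
  have hkey1 := key_coercivity P x1 l1 hx1cont δ1 η hδ1.le hη hgap1 t ht (τ • u) hu1
    (τ • Δ) hd1 hlam1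
  -- data for the second trajectory
  have h1τpos : 0 < 1 - τ := by linarith
  have hu2 : ‖(τ - 1) • u‖ ≤ δ2 := by
    rw [norm_smul, Real.norm_eq_abs, abs_of_neg (by linarith : τ - 1 < 0)]
    calc -(τ - 1) * ‖u‖ = (1 - τ) * ‖u‖ := by ring
      _ ≤ (1 - τ) * D := mul_le_mul_of_nonneg_left hnu_le h1τpos.le
      _ = δ2 := h1τD
  have hd2 : ‖(τ - 1) • Δ‖ ≤ Real.sqrt η * δ2 := by
    rw [norm_smul, Real.norm_eq_abs, abs_of_neg (by linarith : τ - 1 < 0)]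
    calc -(τ - 1) * ‖Δ‖ = (1 - τ) * ‖Δ‖ := by ring
      _ ≤ (1 - τ) * (Real.sqrt η * D) := mul_le_mul_of_nonneg_left hΔ_le h1τpos.le
      _ = Real.sqrt η * ((1 - τ) * D) := by ring
      _ = Real.sqrt η * δ2 := by rw [h1τD]
  have hlam2 : l2 t + (τ - 1) • Δ ∈ orthant m := by
    intro i
    have hdi : (l2 t + (τ - 1) • Δ) i = l2 t i + (τ - 1) * (l2 t i - l1 t i) := by
      simp [hΔ_def, PiLp.add_apply, PiLp.smul_apply, PiLp.sub_apply, smul_eq_mul]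
    rw [hdi]
    nlinarith [horth1mem i, horth2mem i, hτpos.le, hτlt.le]
  have hkey2 := key_coercivity P x2 l2 hx2cont δ2 η hδ2.le hη hgap2 t ht ((τ - 1) • u) hu2
    ((τ - 1) • Δ) hd2 hlam2
  -- rewrite the second estimate at the common midpoint
  have hxbar : x2 t + (τ - 1) • u = x1 t + τ • u := by rw [hu_def]; module
  have hlbar : l2 t + (τ - 1) • Δ = l1 t + τ • Δ := by rw [hΔ_def]; module
  rw [hxbar, hlbar] at hkey2
  -- abbreviations
  set gb := gradient (fun y => P.c y t) (x1 t + τ • u)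
    + ContinuousLinearMap.adjoint (fderiv ℝ (fun y => P.f y t) (x1 t + τ • u))
      (l1 t + τ • Δ) with hgb
  set g1 := gradient (fun y => P.c y t) (x1 t)
    + ContinuousLinearMap.adjoint (fderiv ℝ (fun y => P.f y t) (x1 t)) (l1 t) with hg1
  set g2 := gradient (fun y => P.c y t) (x2 t)
    + ContinuousLinearMap.adjoint (fderiv ℝ (fun y => P.f y t) (x2 t)) (l2 t) with hg2
  set fb := P.f (x1 t + τ • u) t with hfb
  set γ1 := LambdaM P.S P.c P.fc P.fnc x1 l1 δ1
    - Real.sqrt η / 2 * δ1 * Mnc P.S P.fnc x1 δ1 with hγ1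
  set γ2 := LambdaM P.S P.c P.fc P.fnc x2 l2 δ2
    - Real.sqrt η / 2 * δ2 * Mnc P.S P.fnc x2 δ2 with hγ2
  have hγ1pos : 0 < γ1 := sub_pos.mpr hgap1
  have hγ2pos : 0 < γ2 := sub_pos.mpr hgap2
  -- scalar forms
  have hsm1 : ⟪gb - g1, τ • u⟫ + ⟪τ • Δ, P.f (x1 t) t - fb⟫
      = τ * (⟪gb - g1, u⟫ + ⟪Δ, P.f (x1 t) t - fb⟫) := by
    rw [real_inner_smul_right, real_inner_smul_left]; ring
  have hsm2 : ⟪gb - g2, (τ - 1) • u⟫ + ⟪(τ - 1) • Δ, P.f (x2 t) t - fb⟫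
      = (τ - 1) * (⟪gb - g2, u⟫ + ⟪Δ, P.f (x2 t) t - fb⟫) := by
    rw [real_inner_smul_right, real_inner_smul_left]; ring
  have h1n : ‖τ • u‖ ^ 2 = τ ^ 2 * ‖u‖ ^ 2 := by
    rw [norm_smul, Real.norm_eq_abs, abs_of_pos hτpos]; ring
  have h2n : ‖(τ - 1) • u‖ ^ 2 = (1 - τ) ^ 2 * ‖u‖ ^ 2 := by
    rw [norm_smul, Real.norm_eq_abs, abs_of_neg (by linarith : τ - 1 < 0)]; ring
  rw [hsm1, h1n] at hkey1
  rw [hsm2, h2n] at hkey2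
  -- dividing out the scalars
  have hA1low : γ1 * τ * ‖u‖ ^ 2 ≤ ⟪gb - g1, u⟫ + ⟪Δ, P.f (x1 t) t - fb⟫ := by
    apply le_of_mul_le_mul_left _ hτpos
    calc τ * (γ1 * τ * ‖u‖ ^ 2) = γ1 * (τ ^ 2 * ‖u‖ ^ 2) := by ring
      _ ≤ τ * (⟪gb - g1, u⟫ + ⟪Δ, P.f (x1 t) t - fb⟫) := hkey1
  have hA2up : ⟪gb - g2, u⟫ + ⟪Δ, P.f (x2 t) t - fb⟫ ≤ -(γ2 * (1 - τ) * ‖u‖ ^ 2) := by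
    apply le_of_mul_le_mul_left _ h1τpos
    calc (1 - τ) * (⟪gb - g2, u⟫ + ⟪Δ, P.f (x2 t) t - fb⟫)
        = -((τ - 1) * (⟪gb - g2, u⟫ + ⟪Δ, P.f (x2 t) t - fb⟫)) := by ring
      _ ≤ -(γ2 * ((1 - τ) ^ 2 * ‖u‖ ^ 2)) := by linarith [hkey2]
      _ = (1 - τ) * (-(γ2 * (1 - τ) * ‖u‖ ^ 2)) := by ring
  -- monotonicity from the two KKT conditions
  have hm1 : 0 ≤ ⟪g1, u⟫ := by
    have h := hnc1 (x2 t) hx2X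
    rw [← hu_def, inner_neg_left] at h
    linarith
  have hm2 : ⟪g2, u⟫ ≤ 0 := by
    have h := hnc2 (x1 t) hx1X
    have e : x1 t - x2 t = -u := by rw [hu_def]; abel
    rw [e, inner_neg_left, inner_neg_right] at h
    linarith
  have hm3 : ⟪P.f (x1 t) t, Δ⟫ ≤ 0 := by
    have h := hcp1 (l2 t) horth2mem
    rwa [← hΔ_def] at h
  have hm4 : 0 ≤ ⟪P.f (x2 t) t, Δ⟫ := by
    have h := hcp2 (l1 t) horth1mem
    have e : l1 t - l2 t = -Δ := by rw [hΔ_def]; abel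
    rw [e, inner_neg_right] at h
    linarith
  -- the contradiction
  have e1 : ⟪gb - g1, u⟫ = ⟪gb, u⟫ - ⟪g1, u⟫ := inner_sub_left _ _ _
  have e2 : ⟪gb - g2, u⟫ = ⟪gb, u⟫ - ⟪g2, u⟫ := inner_sub_left _ _ _
  have e3 : ⟪Δ, P.f (x1 t) t - fb⟫ = ⟪Δ, P.f (x1 t) t⟫ - ⟪Δ, fb⟫ := inner_sub_right _ _ _
  have e4 : ⟪Δ, P.f (x2 t) t - fb⟫ = ⟪Δ, P.f (x2 t) t⟫ - ⟪Δ, fb⟫ := inner_sub_right _ _ _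
  have c1 : ⟪Δ, P.f (x1 t) t⟫ = ⟪P.f (x1 t) t, Δ⟫ := real_inner_comm _ _
  have c2 : ⟪Δ, P.f (x2 t) t⟫ = ⟪P.f (x2 t) t, Δ⟫ := real_inner_comm _ _
  have hT : (⟪gb - g1, u⟫ + ⟪Δ, P.f (x1 t) t - fb⟫)
      - (⟪gb - g2, u⟫ + ⟪Δ, P.f (x2 t) t - fb⟫) ≤ 0 := by
    rw [e1, e2, e3, e4]
    linarith [hm1, hm2, hm3, hm4, c1, c2]
  have hposs : 0 < γ1 * τ * ‖u‖ ^ 2 + γ2 * (1 - τ) * ‖u‖ ^ 2 :=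
    add_pos (mul_pos (mul_pos hγ1pos hτpos) (pow_pos hnu 2))
      (mul_pos (mul_pos hγ2pos h1τpos) (pow_pos hnu 2))
  linarith [hA1low, hA2up, hT, hposs]

end TVOpt
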